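/- arXiv:1506.01091 — 5 statements merged into one kernel-verified Lean document; each statement's English description precedes it below -/
import Mathlib

section
/- Every down-split sequence s = (s_2, ..., s_n) satisfies s_n = 2n - 3. -/
/-- Down-split sequences.  A sequence `(s_2, …, s_n)` is encoded as the list
`l = [s_2, …, s_n]` of length `n - 1`, so that `s_k = l.get? (k - 2)`.
The sequence `(1)` (i.e. `n = 2`) is down-split; a sequence with `n > 2` is
down-split if it is an increasing sequence of positive integers, the set
`{2 ≤ k < n : s_k = 2k - 2}` is nonempty and, with `k` its infimum, both
`(s_2 - 1, …, s_k - 1)` and `(s_{k+1} - (2k-2), …, s_n - (2k-2))` are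
down-split. -/
inductive IsDownSplit : List ℕ → Prop
  | base : IsDownSplit [1]
  | split (l : List ℕ) (k : ℕ)
      (hmono : l.Chain' (· < ·)) (hpos : ∀ x ∈ l, 0 < x)
      (hn : 2 < l.length + 1)
      (hk2 : 2 ≤ k) (hkn : k < l.length + 1)
      (hsk : l[k - 2]? = some (2 * k - 2))
      (hmin : ∀ j, 2 ≤ j → j < k → l[j - 2]? ≠ some (2 * j - 2))
      (h1 : IsDownSplit ((l.take (k - 1)).map (· - 1)))
      (h2 : IsDownSplit ((l.drop (k - 1)).map (· - (2 * k - 2)))) :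
      IsDownSplit l

/-- Every down-split sequence `s = (s_2, …, s_n)` satisfies
`s_n = 2n - 3`.  (Here `n = l.length + 1`.) -/
theorem statement2 (l : List ℕ) (h : IsDownSplit l) (hne : l ≠ []) :
    l.getLast hne = 2 * (l.length + 1) - 3 := by
  induction h with
  | base => simp
  | split l k hmono hpos hn hk2 hkn hsk hmin h1 h2 ih1 ih2 =>
    have hdne : l.drop (k - 1) ≠ [] := by
      simp only [ne_eq, List.drop_eq_nil_iff]
      omega
    have hmne : (l.drop (k - 1)).map (· - (2 * k - 2)) ≠ [] := by simpa using hdne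
    have hlast : ((l.drop (k - 1)).map (· - (2 * k - 2))).getLast hmne
        = (l.drop (k - 1)).getLast hdne - (2 * k - 2) := List.getLast_map ..
    have hlast2 : (l.drop (k - 1)).getLast hdne = l.getLast hne :=
      List.getLast_drop hdne
    have key := ih2 hmne
    rw [hlast, hlast2] at key
    have hlen : ((l.drop (k - 1)).map (· - (2 * k - 2))).length = l.length - (k - 1) := by
      simp
    rw [hlen] at key
    omega
end

section
/- Every up-split sequence s = (s_1, ..., s_n) satisfies s_n = 2n - 2. -/
/-- Up-split sequences.  A sequence `(s_1, …, s_n)` is encoded as the list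
`l = [s_1, …, s_n]` of length `n`, so that `s_k = l.get? (k - 1)`.
The sequence `(0)` is up-split; a sequence with `n > 1` is up-split if it is an
increasing sequence of nonnegative integers, the set `{1 ≤ k < n : s_k = 2k - 2}`
is nonempty and, with `k` its supremum, `(s_1, …, s_k)` is up-split and
`(s_{k+1} - (2k-1), …, s_n - (2k-1))` is down-split. -/
inductive IsUpSplit : List ℕ → Prop
  | base : IsUpSplit [0]
  | split (l : List ℕ) (k : ℕ)
      (hmono : l.Chain' (· < ·))
      (hn : 1 < l.length)
      (hk1 : 1 ≤ k) (hkn : k < l.length)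
      (hsk : l[k - 1]? = some (2 * k - 2))
      (hmax : ∀ j, k < j → j < l.length → l[j - 1]? ≠ some (2 * j - 2))
      (h1 : IsUpSplit (l.take k))
      (h2 : IsDownSplit ((l.drop k).map (· - (2 * k - 1)))) :
      IsUpSplit l


lemma getLast_drop' (l : List ℕ) (k : ℕ) (h : l.drop k ≠ []) (h' : l ≠ []) :
    (l.drop k).getLast h = l.getLast h' := by
  rw [List.getLast_eq_getElem, List.getLast_eq_getElem, List.getElem_drop]
  congr 1
  have hk : k < l.length := by
    by_contra hh
    exact h (List.drop_eq_nil_of_le (le_of_not_gt hh))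
  simp [List.length_drop]; omega

lemma down_last (l : List ℕ) (h : IsDownSplit l) (hne : l ≠ []) :
    l.getLast hne = 2 * l.length - 1 := by
  induction h with
  | base => simp
  | split l k hmono hpos hn hk2 hkn hsk hmin h1 h2 ih1 ih2 =>
    have hklen : k - 1 < l.length := by omega
    have hdne : l.drop (k - 1) ≠ [] := by
      simp [List.drop_eq_nil_iff]; omega
    have hmne : (l.drop (k - 1)).map (· - (2 * k - 2)) ≠ [] := by
      simpa using hdne
    have := ih2 hmne
    rw [List.getLast_map, getLast_drop' l (k-1) hdne hne] at this
    have hlen : ((l.drop (k - 1)).map (· - (2 * k - 2))).length = l.length - (k - 1) := by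
      simp
    rw [hlen] at this
    omega

/-- Every up-split sequence `s = (s_1, …, s_n)` satisfies
`s_n = 2n - 2`.  (Here `n = l.length`.) -/
theorem statement3 (l : List ℕ) (h : IsUpSplit l) (hne : l ≠ []) :
    l.getLast hne = 2 * l.length - 2 := by
  induction h with
  | base => simp
  | split l k hmono hn hk1 hkn hsk hmax h1 h2 =>
    have hdne : l.drop k ≠ [] := by
      simp [List.drop_eq_nil_iff]; omega
    have hmne : (l.drop k).map (· - (2 * k - 1)) ≠ [] := by
      simpa using hdne
    have := down_last _ h2 hmne
    rw [List.getLast_map, getLast_drop' l k hdne hne] at this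
    have hlen : ((l.drop k).map (· - (2 * k - 1))).length = l.length - k := by simp
    rw [hlen] at this
    omega
end

section
/- Let T be an edge-weighted tree, a a vertex of T, r_T the path-length metric on T, and c a constant with c ≥ max{r_T(a,i) : i a leaf of T}. Define r̃(i,j) = c + (1/2)(r_T(i,j) - r_T(a,i) - r_T(a,j)) for distinct leaves i, j, and r̃(i,i) = 0. Then r̃ is an ultrametric on the leaf set of T, i.e., r̃(i,k) ≤ max(r̃(i,j), r̃(j,k)) for all leaves i, j, k. -/
open SimpleGraph

private lemma sublist_sum_le : ∀ {l₁ l₂ : List ℝ}, List.Sublist l₁ l₂ → (∀ x ∈ l₂, 0 ≤ x) →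
    l₁.sum ≤ l₂.sum := by
  intro l₁ l₂ h
  induction h with
  | slnil => simp
  | cons a h ih =>
    intro h0
    simp only [List.sum_cons]
    have h1 := ih (fun x hx => h0 x (List.mem_cons_of_mem _ hx))
    have h2 := h0 a List.mem_cons_self
    linarith
  | cons_cons a h ih =>
    intro h0
    simp only [List.sum_cons]
    have h1 := ih (fun x hx => h0 x (List.mem_cons_of_mem _ hx))
    linarith

private lemma subperm_sum_le {l₁ l₂ : List ℝ} (h : List.Subperm l₁ l₂) (h0 : ∀ x ∈ l₂, 0 ≤ x) :
    l₁.sum ≤ l₂.sum := by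
  obtain ⟨l, hperm, hsl⟩ := h
  rw [← hperm.sum_eq]
  exact sublist_sum_le hsl h0

private lemma isPath_append' {V : Type*} {G : SimpleGraph V} {u v x : V}
    {p : G.Walk u x} {q : G.Walk x v} (hp : p.IsPath) (hq : q.IsPath)
    (hsep : ∀ z ∈ p.support, z ∈ q.support → z = x) :
    (p.append q).IsPath := by
  rw [Walk.isPath_def, Walk.support_append, List.nodup_append]
  refine ⟨hp.support_nodup, hq.support_nodup.tail, ?_⟩
  intro z hzp y hzq hzy
  subst hzy
  have hzq' : z ∈ q.support := by
    rw [q.support_eq_cons]; exact List.mem_cons_of_mem _ hzq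
  have hzx : z = x := hsep z hzp hzq'
  subst hzx
  have hnd := hq.support_nodup
  rw [q.support_eq_cons] at hnd
  exact (List.nodup_cons.mp hnd).1 hzq

private lemma exists_meet {V : Type*} {G : SimpleGraph V} (S : Set V) :
    ∀ {b u : V} (r : G.Walk b u), u ∈ S → ∃ (x : V) (q₁ : G.Walk b x) (q₂ : G.Walk x u),
      r = q₁.append q₂ ∧ x ∈ S ∧ ∀ z ∈ q₁.support, z ∈ S → z = x := by
  intro b u r
  induction r with
  | nil => exact fun hu => ⟨_, .nil, .nil, rfl, hu, by simp⟩
  | @cons b v _ h r' ih =>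
    intro hu
    by_cases hb : b ∈ S
    · exact ⟨b, .nil, .cons h r', rfl, hb, by simp⟩
    · obtain ⟨x, q₁, q₂, hre, hx, hmin⟩ := ih hu
      refine ⟨x, .cons h q₁, q₂, by simp [hre], hx, ?_⟩
      intro z hz hzp
      rcases List.mem_cons.mp (by simpa using hz) with rfl | hz'
      · exact absurd hzp hb
      · exact hmin z hz' hzp

/-- Let `T` be an edge-weighted tree (a finite tree `G` with positive
weights `w` on its edges), let `r_T = d` be the path-length metric (for any path `p`
between `u` and `v`, `d u v` is the sum of the weights of the edges of `p`; in a tree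
paths are unique), let `a` be a vertex and `c ≥ max {d a i : i a leaf}`.  Define the
Farris transform `r̃ i j = c + (d i j - d a i - d a j)/2` for distinct leaves `i ≠ j`
and `r̃ i i = 0`.  Then `r̃` is an ultrametric on the leaf set:
`r̃ i k ≤ max (r̃ i j) (r̃ j k)` for all leaves `i, j, k`. -/
theorem statement5 {V : Type*} [Fintype V] (G : SimpleGraph V) (hT : G.IsTree)
    (w : Sym2 V → ℝ) (hw : ∀ e ∈ G.edgeSet, 0 < w e)
    (d : V → V → ℝ)
    (hd : ∀ (u v : V) (p : G.Walk u v), p.IsPath → d u v = (p.edges.map w).sum)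
    (leaves : Set V) (hleaves : leaves = {v : V | (G.neighborSet v).ncard = 1})
    (a : V) (c : ℝ) (hc : ∀ i ∈ leaves, d a i ≤ c)
    (r : V → V → ℝ)
    (hr : ∀ i j, i ≠ j → r i j = c + (d i j - d a i - d a j) / 2)
    (hrdiag : ∀ i, r i i = 0) :
    ∀ i ∈ leaves, ∀ j ∈ leaves, ∀ k ∈ leaves, r i k ≤ max (r i j) (r j k) := by
  classical
  have hwalk : ∀ u v : V, ∃ p : G.Walk u v, p.IsPath := fun u v =>
    ⟨(hT.isConnected.preconnected u v).some.bypass, Walk.bypass_isPath _⟩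
  have dnn : ∀ u v : V, 0 ≤ d u v := by
    intro u v
    obtain ⟨p, hp⟩ := hwalk u v
    rw [hd u v p hp]
    apply List.sum_nonneg
    intro t ht
    obtain ⟨e, he, rfl⟩ := List.mem_map.mp ht
    exact (hw e (p.edges_subset_edgeSet he)).le
  have dsymm : ∀ u v : V, d u v = d v u := by
    intro u v
    obtain ⟨p, hp⟩ := hwalk u v
    rw [hd u v p hp, hd v u p.reverse hp.reverse, Walk.edges_reverse, List.map_reverse,
      List.sum_reverse]
  have dtri : ∀ u x v : V, d u v ≤ d u x + d x v := by
    intro u x v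
    obtain ⟨p, hp⟩ := hwalk u x
    obtain ⟨q, hq⟩ := hwalk x v
    have hb : (p.append q).bypass.IsPath := Walk.bypass_isPath _
    rw [hd u v _ hb, hd u x p hp, hd x v q hq]
    have hsub : List.Subperm ((p.append q).bypass.edges.map w) ((p.append q).edges.map w) := by
      obtain ⟨l, hperm, hsl⟩ :=
        (hb.isTrail.edges_nodup).subperm (Walk.edges_bypass_subset _)
      exact ⟨l.map w, hperm.map w, hsl.map w⟩
    have h0 : ∀ t ∈ (p.append q).edges.map w, (0:ℝ) ≤ t := by
      intro t ht
      obtain ⟨e, he, rfl⟩ := List.mem_map.mp ht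
      exact (hw e ((p.append q).edges_subset_edgeSet he)).le
    have hle := subperm_sum_le hsub h0
    rwa [Walk.edges_append, List.map_append, List.sum_append] at hle
  have dsplit : ∀ (u v x : V) (p : G.Walk u v) (hp : p.IsPath) (hx : x ∈ p.support),
      d u v = d u x + d x v := by
    intro u v x p hp hx
    have key : d u v = ((p.takeUntil x hx).edges.map w).sum
        + ((p.dropUntil x hx).edges.map w).sum := by
      rw [hd u v p hp]
      conv_lhs => rw [← p.take_spec hx]
      rw [Walk.edges_append, List.map_append, List.sum_append]
    rw [key, hd u x _ (hp.takeUntil hx), hd x v _ (hp.dropUntil hx)]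
  have med : ∀ (u v b : V) (p : G.Walk u v), p.IsPath → ∃ x ∈ p.support,
      d u v = d u x + d x v ∧ d b u = d b x + d x u ∧ d b v = d b x + d x v := by
    intro u v b p hp
    obtain ⟨r0, hr0⟩ := hwalk b u
    obtain ⟨x, q₁, q₂, hre, hx, hmin⟩ :=
      exists_meet {z | z ∈ p.support} r0 p.start_mem_support
    have hq₁ : q₁.IsPath := by rw [hre] at hr0; exact hr0.of_append_left
    have hq₂ : q₂.IsPath := by rw [hre] at hr0; exact hr0.of_append_right
    refine ⟨x, hx, dsplit u v x p hp hx, ?_, ?_⟩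
    · have h1 : d b u = ((q₁.append q₂).edges.map w).sum := by
        rw [hd b u r0 hr0, hre]
      rw [Walk.edges_append, List.map_append, List.sum_append] at h1
      rw [h1, hd b x q₁ hq₁, hd x u q₂ hq₂]
    · have hap : (q₁.append (p.dropUntil x hx)).IsPath :=
        isPath_append' hq₁ (hp.dropUntil hx)
          (fun z hz hz2 => hmin z hz (p.support_dropUntil_subset hx hz2))
      have h1 := hd b v _ hap
      rw [Walk.edges_append, List.map_append, List.sum_append] at h1
      rw [h1, hd b x q₁ hq₁, hd x v _ (hp.dropUntil hx)]
  have hcol : ∀ (u v x y : V) (p : G.Walk u v) (hp : p.IsPath)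
      (hx : x ∈ p.support) (hy : y ∈ p.support),
      d u y = d u x + d x y ∨ d u x = d u y + d y x := by
    intro u v x y p hp hx hy
    have hy' : y ∈ (p.takeUntil x hx).support ∨ y ∈ (p.dropUntil x hx).support := by
      rw [← Walk.mem_support_append_iff, p.take_spec hx]; exact hy
    rcases hy' with h | h
    · right; exact dsplit u x y _ (hp.takeUntil hx) h
    · left
      have e1 := dsplit x v y _ (hp.dropUntil hx) h
      have e2 := dsplit u v x p hp hx
      have e3 := dsplit u v y p hp hy
      linarith
  have key : ∀ i j k : V, d i k + d a j ≤ max (d i j + d a k) (d j k + d a i) := by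
    intro i j k
    obtain ⟨p, hp⟩ := hwalk i k
    obtain ⟨x, hx, hik1, hai, hak⟩ := med i k a p hp
    obtain ⟨y, hy, hik2, hji, hjk⟩ := med i k j p hp
    have t1 := dtri a x j
    have t2 := dtri x y j
    have s1 := dsymm i j
    have s2 := dsymm y i
    have s3 := dsymm y j
    have s4 := dsymm x y
    have s5 := dsymm x i
    rcases hcol i k x y p hp hx hy with h | h
    · exact le_max_of_le_left (by linarith)
    · exact le_max_of_le_right (by linarith)
  intro i hi j hj k hk
  by_cases hik : i = k
  · subst hik
    rw [hrdiag i]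
    by_cases hij : i = j
    · subst hij; simp [hrdiag]
    · have h1 := hr i j hij
      have h2 := dnn i j
      have h3 := hc i hi
      have h4 := hc j hj
      have h5 : 0 ≤ r i j := by rw [h1]; linarith
      exact le_trans h5 (le_max_left _ _)
  · by_cases hij : i = j
    · subst hij; exact le_max_right _ _
    · by_cases hjk : j = k
      · subst hjk; exact le_max_left _ _
      · rw [hr i k hik, hr i j hij, hr j k hjk, le_max_iff]
        rcases le_max_iff.mp (key i j k) with h | h
        · left; linarith
        · right; linarith
end

section
/- Let n_0, ..., n_ℓ and n_0', ..., n_ℓ' be nonnegative integers and define the polynomials (Fourier transforms) g(z) = Σ_{k=0}^{ℓ} n_k e^{izk} and g'(z) = Σ_{k=0}^{ℓ} n_k' e^{izk}. Suppose (i) g(z)g(-z) = g'(z)g'(-z) for all z ∈ ℂ, and (ii) g(z) + e^{izℓ} g(-z) = g'(z) + e^{izℓ} g'(-z) for all z ∈ ℂ, and (iii) there exist finitely supported integer-valued functions C, D on ℤ with φ(z) = Σ_k C(k)e^{izk}, ψ(z) = Σ_k D(k)e^{izk} satisfying g = φψ and g'(z) = φ(z)ψ(-z). Then either n_r = n_r'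 for all 0 ≤ r ≤ ℓ, or n_r = n'_{ℓ-r} for all 0 ≤ r ≤ ℓ. -/
open Complex Polynomial

private lemma exists_exp' (w : ℂ) (hw : w ≠ 0) : ∃ z : ℂ, Complex.exp (I * z) = w := by
  refine ⟨-(I * Complex.log w), ?_⟩
  have h : I * -(I * Complex.log w) = Complex.log w := by
    rw [mul_neg, ← mul_assoc, Complex.I_mul_I]; ring
  rw [h, Complex.exp_log hw]

private lemma poly_eq_zero' (p : Polynomial ℂ) (h : ∀ w : ℂ, w ≠ 0 → p.eval w = 0) : p = 0 := by
  apply Polynomial.eq_zero_of_infinite_isRoot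
  have h1 : ({(0:ℂ)}ᶜ : Set ℂ).Infinite := (Set.finite_singleton 0).infinite_compl
  exact h1.mono (fun w hw => h w (by simpa using hw))

private lemma coeff_eq' (m : ℕ) (c c' : ℕ → ℂ)
    (h : ∀ z : ℂ, ∑ k ∈ Finset.range m, c k * Complex.exp (I * z * k)
        = ∑ k ∈ Finset.range m, c' k * Complex.exp (I * z * k)) :
    ∀ r < m, c r = c' r := by
  set p : Polynomial ℂ := ∑ k ∈ Finset.range m, Polynomial.C (c k - c' k) * Polynomial.X ^ k
    with hp
  have hz : p = 0 := by
    apply poly_eq_zero'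
    intro w hw
    obtain ⟨z, hzw⟩ := exists_exp' w hw
    have he : ∀ k : ℕ, Complex.exp (I * z * k) = w ^ k := by
      intro k
      rw [show I * z * (k:ℂ) = (k:ℂ) * (I * z) by ring, Complex.exp_nat_mul, hzw]
    have h2 := h z
    simp only [he] at h2
    simp only [hp, Polynomial.eval_finset_sum, Polynomial.eval_mul, Polynomial.eval_C,
      Polynomial.eval_pow, Polynomial.eval_X]
    calc ∑ k ∈ Finset.range m, (c k - c' k) * w ^ k
        = (∑ k ∈ Finset.range m, c k * w ^ k) - ∑ k ∈ Finset.range m, c' k * w ^ k := by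
          rw [← Finset.sum_sub_distrib]; exact Finset.sum_congr rfl (fun k _ => by ring)
      _ = 0 := by rw [h2, sub_self]
  intro r hr
  have hc : p.coeff r = c r - c' r := by
    simp only [hp, Polynomial.finset_sum_coeff, Polynomial.coeff_C_mul, Polynomial.coeff_X_pow,
      mul_ite, mul_one, mul_zero]
    simp [Finset.sum_ite_eq, Finset.mem_range.mpr hr]
  rw [hz] at hc
  simp only [Polynomial.coeff_zero] at hc
  exact sub_eq_zero.mp hc.symm

private lemma eval_zsum' (a : ℤ →₀ ℤ) (e : ℤ → ℤ) (he : ∀ k ∈ a.support, 0 ≤ e k)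
    (w : ℂ) (hw : w ≠ 0) :
    (∑ k ∈ a.support, Polynomial.C ((a k : ℂ)) * Polynomial.X ^ (e k).toNat).eval w
      = ∑ k ∈ a.support, (a k : ℂ) * w ^ (e k) := by
  rw [Polynomial.eval_finset_sum]
  refine Finset.sum_congr rfl fun k hk => ?_
  rw [Polynomial.eval_mul, Polynomial.eval_C, Polynomial.eval_pow, Polynomial.eval_X,
    ← zpow_natCast, Int.toNat_of_nonneg (he k hk)]

open Complex in
/-- Let `n_0, …, n_ℓ` and `n'_0, …, n'_ℓ` be nonnegative integers with
Fourier transforms `g z = Σ_{k=0}^{ℓ} n_k e^{izk}` and `g' z = Σ_{k=0}^{ℓ} n'_k e^{izk}`.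
Suppose (i) `g(z)g(-z) = g'(z)g'(-z)` for all `z ∈ ℂ`, (ii)
`g(z) + e^{izℓ} g(-z) = g'(z) + e^{izℓ} g'(-z)` for all `z ∈ ℂ`, and (iii) there exist
finitely supported integer-valued functions `C, D` on `ℤ`, with associated trigonometric
polynomials `φ z = Σ_k C(k)e^{izk}` and `ψ z = Σ_k D(k)e^{izk}`, such that `g = φψ` and
`g'(z) = φ(z)ψ(-z)`.  Then either `n_r = n'_r` for all `0 ≤ r ≤ ℓ`, or
`n_r = n'_{ℓ-r}` for all `0 ≤ r ≤ ℓ`. -/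
theorem statement10 (ℓ : ℕ) (n n' : ℕ → ℕ)
    (g g' : ℂ → ℂ)
    (hg : ∀ z, g z = ∑ k ∈ Finset.range (ℓ + 1), (n k : ℂ) * Complex.exp (I * z * k))
    (hg' : ∀ z, g' z = ∑ k ∈ Finset.range (ℓ + 1), (n' k : ℂ) * Complex.exp (I * z * k))
    (hauto : ∀ z : ℂ, g z * g (-z) = g' z * g' (-z))
    (hrefl : ∀ z : ℂ, g z + Complex.exp (I * z * ℓ) * g (-z)
        = g' z + Complex.exp (I * z * ℓ) * g' (-z))
    (C D : ℤ →₀ ℤ) (φ ψ : ℂ → ℂ)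
    (hφ : ∀ z, φ z = C.sum fun k c => (c : ℂ) * Complex.exp (I * z * k))
    (hψ : ∀ z, ψ z = D.sum fun k c => (c : ℂ) * Complex.exp (I * z * k))
    (hfac : ∀ z, g z = φ z * ψ z)
    (hfac' : ∀ z, g' z = φ z * ψ (-z)) :
    (∀ r ≤ ℓ, n r = n' r) ∨ (∀ r ≤ ℓ, n r = n' (ℓ - r)) := by
  classical
  -- key factorized identity
  have key : ∀ z : ℂ,
      (φ z - Complex.exp (I * z * ℓ) * φ (-z)) * (ψ z - ψ (-z)) = 0 := by
    intro z
    have h := hrefl z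
    rw [hfac z, hfac (-z), hfac' z, hfac' (-z), neg_neg] at h
    linear_combination h
  -- evaluation of φ, ψ at points on the exponential curve
  have hφw : ∀ z : ℂ, φ z = ∑ k ∈ C.support, (C k : ℂ) * Complex.exp (I * z) ^ (k : ℤ) := by
    intro z
    rw [hφ z, Finsupp.sum]
    refine Finset.sum_congr rfl fun k _ => ?_
    rw [show I * z * (k : ℂ) = ((k : ℤ) : ℂ) * (I * z) by push_cast; ring, Complex.exp_int_mul]
  have hφnw : ∀ z : ℂ, φ (-z) = ∑ k ∈ C.support, (C k : ℂ) * Complex.exp (I * z) ^ (-k : ℤ) := by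
    intro z
    rw [hφ (-z), Finsupp.sum]
    refine Finset.sum_congr rfl fun k _ => ?_
    rw [show I * (-z) * (k : ℂ) = ((-k : ℤ) : ℂ) * (I * z) by push_cast; ring,
      Complex.exp_int_mul]
  have hψw : ∀ z : ℂ, ψ z = ∑ k ∈ D.support, (D k : ℂ) * Complex.exp (I * z) ^ (k : ℤ) := by
    intro z
    rw [hψ z, Finsupp.sum]
    refine Finset.sum_congr rfl fun k _ => ?_
    rw [show I * z * (k : ℂ) = ((k : ℤ) : ℂ) * (I * z) by push_cast; ring, Complex.exp_int_mul]
  have hψnw : ∀ z : ℂ, ψ (-z) = ∑ k ∈ D.support, (D k : ℂ) * Complex.exp (I * z) ^ (-k : ℤ) := by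
    intro z
    rw [hψ (-z), Finsupp.sum]
    refine Finset.sum_congr rfl fun k _ => ?_
    rw [show I * (-z) * (k : ℂ) = ((-k : ℤ) : ℂ) * (I * z) by push_cast; ring,
      Complex.exp_int_mul]
  have hexpl : ∀ z : ℂ, Complex.exp (I * z * ℓ) = Complex.exp (I * z) ^ ℓ := by
    intro z
    rw [show I * z * (ℓ : ℂ) = (ℓ : ℂ) * (I * z) by ring, Complex.exp_nat_mul]
  set N : ℕ := C.support.sup (fun k => k.natAbs) with hN
  set M : ℕ := D.support.sup (fun k => k.natAbs) with hM
  have hNk : ∀ k ∈ C.support, -(N : ℤ) ≤ k ∧ k ≤ N := by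
    intro k hk
    have h1 : k.natAbs ≤ N := Finset.le_sup hk
    have h2 : |k| ≤ (N : ℤ) := by rw [Int.abs_eq_natAbs]; exact_mod_cast h1
    exact abs_le.mp h2
  have hMk : ∀ k ∈ D.support, -(M : ℤ) ≤ k ∧ k ≤ M := by
    intro k hk
    have h1 : k.natAbs ≤ M := Finset.le_sup hk
    have h2 : |k| ≤ (M : ℤ) := by rw [Int.abs_eq_natAbs]; exact_mod_cast h1
    exact abs_le.mp h2
  set P : Polynomial ℂ :=
    (∑ k ∈ C.support, Polynomial.C ((C k : ℂ)) * Polynomial.X ^ (k + (N : ℤ)).toNat)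
      - Polynomial.X ^ ℓ *
        ∑ k ∈ C.support, Polynomial.C ((C k : ℂ)) * Polynomial.X ^ ((N : ℤ) - k).toNat with hP
  set Q : Polynomial ℂ :=
    (∑ k ∈ D.support, Polynomial.C ((D k : ℂ)) * Polynomial.X ^ (k + (M : ℤ)).toNat)
      - ∑ k ∈ D.support, Polynomial.C ((D k : ℂ)) * Polynomial.X ^ ((M : ℤ) - k).toNat with hQ
  -- evaluate P at exp(I z)
  have hPev : ∀ z : ℂ, P.eval (Complex.exp (I * z))
      = Complex.exp (I * z) ^ (N : ℤ) * (φ z - Complex.exp (I * z * ℓ) * φ (-z)) := by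
    intro z
    have hw : Complex.exp (I * z) ≠ 0 := Complex.exp_ne_zero _
    set w := Complex.exp (I * z) with hwdef
    have e1 : (∑ k ∈ C.support, Polynomial.C ((C k : ℂ))
        * Polynomial.X ^ (k + (N : ℤ)).toNat).eval w
        = ∑ k ∈ C.support, (C k : ℂ) * w ^ (k + (N : ℤ)) :=
      eval_zsum' C (fun k => k + N) (fun k hk => by have := hNk k hk; show (0:ℤ) ≤ k + N; omega) w hw
    have e2 : (∑ k ∈ C.support, Polynomial.C ((C k : ℂ))
        * Polynomial.X ^ ((N : ℤ) - k).toNat).eval w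
        = ∑ k ∈ C.support, (C k : ℂ) * w ^ ((N : ℤ) - k) :=
      eval_zsum' C (fun k => (N : ℤ) - k) (fun k hk => by have := hNk k hk; show (0:ℤ) ≤ (N:ℤ) - k; omega) w hw
    rw [hP, Polynomial.eval_sub, Polynomial.eval_mul, Polynomial.eval_pow, Polynomial.eval_X,
      e1, e2, hφw z, hφnw z, hexpl z]
    simp only [mul_sub, Finset.mul_sum, ← Finset.sum_sub_distrib]
    refine Finset.sum_congr rfl fun k hk => ?_
    have hz1 : w ^ (k + (N : ℤ)) = w ^ (k : ℤ) * w ^ (N : ℤ) := zpow_add₀ hw _ _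
    have hz2 : w ^ ((N : ℤ) - k) = w ^ (N : ℤ) * w ^ (-k : ℤ) := by
      rw [sub_eq_add_neg, zpow_add₀ hw]
    rw [hz1, hz2]
    ring
  have hQev : ∀ z : ℂ, Q.eval (Complex.exp (I * z))
      = Complex.exp (I * z) ^ (M : ℤ) * (ψ z - ψ (-z)) := by
    intro z
    have hw : Complex.exp (I * z) ≠ 0 := Complex.exp_ne_zero _
    set w := Complex.exp (I * z) with hwdef
    have e1 : (∑ k ∈ D.support, Polynomial.C ((D k : ℂ))
        * Polynomial.X ^ (k + (M : ℤ)).toNat).eval w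
        = ∑ k ∈ D.support, (D k : ℂ) * w ^ (k + (M : ℤ)) :=
      eval_zsum' D (fun k => k + M) (fun k hk => by have := hMk k hk; show (0:ℤ) ≤ k + M; omega) w hw
    have e2 : (∑ k ∈ D.support, Polynomial.C ((D k : ℂ))
        * Polynomial.X ^ ((M : ℤ) - k).toNat).eval w
        = ∑ k ∈ D.support, (D k : ℂ) * w ^ ((M : ℤ) - k) :=
      eval_zsum' D (fun k => (M : ℤ) - k) (fun k hk => by have := hMk k hk; show (0:ℤ) ≤ (M:ℤ) - k; omega) w hw
    rw [hQ, Polynomial.eval_sub, e1, e2, hψw z, hψnw z]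
    simp only [mul_sub, Finset.mul_sum, ← Finset.sum_sub_distrib]
    refine Finset.sum_congr rfl fun k hk => ?_
    have hz1 : w ^ (k + (M : ℤ)) = w ^ (k : ℤ) * w ^ (M : ℤ) := zpow_add₀ hw _ _
    have hz2 : w ^ ((M : ℤ) - k) = w ^ (M : ℤ) * w ^ (-k : ℤ) := by
      rw [sub_eq_add_neg, zpow_add₀ hw]
    rw [hz1, hz2]
    ring
  -- P * Q vanishes on ℂ \ {0}
  have hPQ : P * Q = 0 := by
    apply poly_eq_zero'
    intro w hw
    obtain ⟨z, hzw⟩ := exists_exp' w hw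
    rw [Polynomial.eval_mul, ← hzw, hPev z, hQev z]
    rw [mul_mul_mul_comm]
    rw [key z, mul_zero]
  rcases mul_eq_zero.mp hPQ with hP0 | hQ0
  · -- φ z = exp(I z ℓ) φ(-z), so g' z = exp(I z ℓ) g(-z)
    right
    have hφs : ∀ z : ℂ, φ z = Complex.exp (I * z * ℓ) * φ (-z) := by
      intro z
      have := hPev z
      rw [hP0, Polynomial.eval_zero] at this
      have hw : Complex.exp (I * z) ≠ 0 := Complex.exp_ne_zero _
      have hne : Complex.exp (I * z) ^ (N : ℤ) ≠ 0 := zpow_ne_zero _ hw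
      have h2 := (mul_eq_zero.mp this.symm).resolve_left hne
      exact sub_eq_zero.mp h2
    have hgs : ∀ z : ℂ, g' z = Complex.exp (I * z * ℓ) * g (-z) := by
      intro z
      rw [hfac' z, hφs z, hfac (-z)]
      ring
    have hsum : ∀ z : ℂ, ∑ k ∈ Finset.range (ℓ + 1), (n' k : ℂ) * Complex.exp (I * z * k)
        = ∑ k ∈ Finset.range (ℓ + 1), ((n (ℓ - k) : ℕ) : ℂ) * Complex.exp (I * z * k) := by
      intro z
      calc ∑ k ∈ Finset.range (ℓ + 1), (n' k : ℂ) * Complex.exp (I * z * k)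
          = g' z := (hg' z).symm
        _ = Complex.exp (I * z * ℓ) * g (-z) := hgs z
        _ = ∑ k ∈ Finset.range (ℓ + 1), (n k : ℂ) * Complex.exp (I * z * ((ℓ - k : ℕ) : ℂ)) := by
            rw [hg (-z), Finset.mul_sum]
            refine Finset.sum_congr rfl fun k hk => ?_
            have hkl : k ≤ ℓ := Nat.lt_succ_iff.mp (Finset.mem_range.mp hk)
            rw [mul_comm (Complex.exp (I * z * ℓ)), mul_assoc, ← Complex.exp_add]
            congr 2
            push_cast [Nat.cast_sub hkl]
            ring
        _ = ∑ k ∈ Finset.range (ℓ + 1), ((n (ℓ - k) : ℕ) : ℂ) * Complex.exp (I * z * k) := by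
            rw [← Finset.sum_range_reflect
              (fun j => ((n (ℓ - j) : ℕ) : ℂ) * Complex.exp (I * z * j)) (ℓ + 1)]
            refine Finset.sum_congr rfl fun k hk => ?_
            have hkl : k ≤ ℓ := Nat.lt_succ_iff.mp (Finset.mem_range.mp hk)
            have h1 : ℓ + 1 - 1 - k = ℓ - k := by omega
            have h2 : ℓ - (ℓ - k) = k := by omega
            rw [h1, h2]
    have hco := coeff_eq' (ℓ + 1) (fun k => ((n' k : ℕ) : ℂ)) (fun k => ((n (ℓ - k) : ℕ) : ℂ))
      hsum
    intro r hr
    have h3 := hco (ℓ - r) (Nat.lt_succ_of_le (Nat.sub_le ℓ r))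
    have h4 : ℓ - (ℓ - r) = r := by omega
    simp only [h4] at h3
    exact_mod_cast h3.symm
  · -- ψ z = ψ(-z), so g' = g
    left
    have hψs : ∀ z : ℂ, ψ z = ψ (-z) := by
      intro z
      have h1 := hQev z
      rw [hQ0, Polynomial.eval_zero] at h1
      have hw : Complex.exp (I * z) ≠ 0 := Complex.exp_ne_zero _
      have hne : Complex.exp (I * z) ^ (M : ℤ) ≠ 0 := zpow_ne_zero _ hw
      have h2 := (mul_eq_zero.mp h1.symm).resolve_left hne
      exact sub_eq_zero.mp h2
    have hgg : ∀ z : ℂ, g z = g' z := by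
      intro z
      rw [hfac z, hfac' z, hψs z]
    have := coeff_eq' (ℓ + 1) (fun k => (n k : ℂ)) (fun k => (n' k : ℂ))
      (fun z => by rw [← hg z, ← hg' z, hgg z])
    intro r hr
    have h5 := this r (Nat.lt_succ_of_le hr)
    exact_mod_cast h5
end

section
/- Let ℓ ≥ 1 and p_1, ..., p_ℓ be the normalized elementary symmetric means of positive reals n_1, ..., n_ℓ, i.e., p_j = e_j(n_1,...,n_ℓ)/binom(ℓ,j). If α_1,...,α_ℓ and β_1,...,β_ℓ are positive reals with Σ_j j·α_j = Σ_j j·β_j and Σ_{i=j}^{ℓ} (i-j+1)·α_i ≥ Σ_{i=j}^{ℓ} (i-j+1)·β_i for all 2 ≤ j ≤ ℓ, then Π_{j=1}^{ℓ} p_j^{α_j} ≤ Π_{j=1}^{ℓ} p_j^{β_j}. -/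
open Finset

noncomputable def esum {ι : Type*} (x : ι → ℝ) (s : Finset ι) (j : ℕ) : ℝ :=
  ∑ t ∈ s.powersetCard j, ∏ i ∈ t, x i

lemma esum_zero {ι : Type*} (x : ι → ℝ) (s : Finset ι) : esum x s 0 = 1 := by
  simp [esum]

lemma esum_of_card_lt {ι : Type*} (x : ι → ℝ) {s : Finset ι} {j : ℕ} (h : s.card < j) :
    esum x s j = 0 := by
  rw [esum, Finset.powersetCard_eq_empty.2 h, Finset.sum_empty]

lemma esum_nonneg {ι : Type*} {x : ι → ℝ} {s : Finset ι} (hx : ∀ i ∈ s, 0 ≤ x i) (j : ℕ) :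
    0 ≤ esum x s j := by
  refine Finset.sum_nonneg fun t ht => Finset.prod_nonneg fun i hi => ?_
  exact hx i ((Finset.mem_powersetCard.1 ht).1 hi)

lemma esum_pos {ι : Type*} {x : ι → ℝ} {s : Finset ι} (hx : ∀ i ∈ s, 0 < x i) {j : ℕ}
    (hj : j ≤ s.card) : 0 < esum x s j := by
  refine Finset.sum_pos (fun t ht => Finset.prod_pos fun i hi =>
    hx i ((Finset.mem_powersetCard.1 ht).1 hi)) ?_
  exact Finset.powersetCard_nonempty_of_le hj

lemma esum_insert {ι : Type*} [DecidableEq ι] (x : ι → ℝ) {s : Finset ι} {a : ι}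
    (ha : a ∉ s) (j : ℕ) :
    esum x (insert a s) (j+1) = esum x s (j+1) + x a * esum x s j := by
  rw [esum, powersetCard_succ_insert ha]
  rw [Finset.sum_union]
  · congr 1
    rw [Finset.sum_image]
    · rw [esum, Finset.mul_sum]
      refine Finset.sum_congr rfl fun t ht => ?_
      have hat : a ∉ t := fun h => ha ((Finset.mem_powersetCard.1 ht).1 h)
      rw [Finset.prod_insert hat]
    · intro t1 h1 t2 h2 he
      have h1' : a ∉ t1 := fun h => ha ((Finset.mem_powersetCard.1 h1).1 h)
      have h2' : a ∉ t2 := fun h => ha ((Finset.mem_powersetCard.1 h2).1 h)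
      rw [← Finset.erase_insert h1', ← Finset.erase_insert h2', he]
  · rw [Finset.disjoint_right]
    intro t ht ht'
    obtain ⟨t', hmem, rfl⟩ := Finset.mem_image.1 ht
    exact ha ((Finset.mem_powersetCard.1 ht').1 (Finset.mem_insert_self a t'))



lemma key1 (a d t u h : ℝ) (ha : 0 ≤ a) (ha1 : a ≤ 1) (hd : 0 ≤ d) (hd1 : d ≤ 1)
    (ht : 0 < t) (hh : 0 < h) (hu1 : h ≤ u) (hu2 : u ≤ 1 - h) :
    ((1-u+h) + (u-h)*t*a) * ((1-u-h)*d + (u+h)*t) ≤ ((1-u) + u*t)^2 := by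
  have hA : 0 ≤ (u - h) * (1 - h - u) := mul_nonneg (by linarith) (by linarith)
  have c00 : 0 ≤ ((1-u) + u*t)^2 - ((1-u+h) + 0) * (0 + (u+h)*t) := by
    nlinarith [sq_nonneg (u*t - (1-u)), mul_pos hh ht, mul_nonneg hA ht.le]
  have c01 : 0 ≤ ((1-u) + u*t)^2 - ((1-u+h) + 0) * ((1-u-h) + (u+h)*t) := by
    nlinarith [sq_nonneg (u*t - h), mul_pos hh ht, mul_nonneg hA ht.le]
  have c10 : 0 ≤ ((1-u) + u*t)^2 - ((1-u+h) + (u-h)*t) * (0 + (u+h)*t) := by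
    nlinarith [sq_nonneg (h*t - (1-u)), mul_pos hh ht, mul_nonneg hA ht.le]
  have c11 : 0 ≤ ((1-u) + u*t)^2 - ((1-u+h) + (u-h)*t) * ((1-u-h) + (u+h)*t) := by
    nlinarith [sq_nonneg (h*(t-1))]
  have w00 := mul_nonneg (mul_nonneg (by linarith : (0:ℝ) ≤ 1 - a) (by linarith : (0:ℝ) ≤ 1 - d)) c00
  have w01 := mul_nonneg (mul_nonneg (by linarith : (0:ℝ) ≤ 1 - a) hd) c01
  have w10 := mul_nonneg (mul_nonneg ha (by linarith : (0:ℝ) ≤ 1 - d)) c10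
  have w11 := mul_nonneg (mul_nonneg ha hd) c11
  nlinarith [w00, w01, w10, w11]

lemma key (a b c d t u h : ℝ) (ha : 0 ≤ a) (hb : 0 < b) (hc : 0 < c) (hd : 0 ≤ d)
    (ht : 0 < t) (hh : 0 < h) (hu1 : h ≤ u) (hu2 : u ≤ 1 - h)
    (h1 : a * c ≤ b^2) (h2 : b * d ≤ c^2) :
    ((1-u+h)*b + (u-h)*t*a) * ((1-u-h)*d + (u+h)*t*c) ≤ ((1-u)*c + u*t*b)^2 := by
  have ha' : 0 ≤ a*c/b^2 := by positivity
  have ha1' : a*c/b^2 ≤ 1 := by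
    rw [div_le_one (by positivity)]; linarith
  have hd' : 0 ≤ b*d/c^2 := by positivity
  have hd1' : b*d/c^2 ≤ 1 := by
    rw [div_le_one (by positivity)]; linarith
  have ht' : 0 < t*b/c := by positivity
  have H := key1 (a*c/b^2) (b*d/c^2) (t*b/c) u h ha' ha1' hd' hd1' ht' hh hu1 hu2
  have e1 : ((1-u+h) + (u-h)*(t*b/c)*(a*c/b^2)) * ((1-u-h)*(b*d/c^2) + (u+h)*(t*b/c))
      = ((1-u+h)*b + (u-h)*t*a) * ((1-u-h)*d + (u+h)*t*c) / c^2 * (c/b) * (b/c) := by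
    field_simp
  have e2 : ((1-u) + u*(t*b/c))^2 = ((1-u)*c + u*t*b)^2 / c^2 := by
    field_simp
  rw [e1, e2] at H
  have hbc : c/b*(b/c) = 1 := by field_simp
  rw [mul_assoc, hbc, mul_one, div_le_div_iff_of_pos_right (by positivity)] at H
  exact H

noncomputable def pmean {ι : Type*} (x : ι → ℝ) (s : Finset ι) (j : ℕ) : ℝ :=
  esum x s j / (s.card.choose j)

lemma choose_id2 (n k : ℕ) :
    ((k:ℝ)+1) * ((n+1).choose (k+1)) = ((n:ℝ)+1) * (n.choose k) := by
  have := Nat.add_one_mul_choose_eq n k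
  have := congrArg (Nat.cast : ℕ → ℝ) this
  push_cast at this
  linarith

lemma choose_id1 (n k : ℕ) :
    ((n:ℝ)-k) * ((n+1).choose (k+1)) = ((n:ℝ)+1) * (n.choose (k+1)) := by
  have h2 := choose_id2 n k
  have h3 := congrArg (Nat.cast : ℕ → ℝ) (Nat.choose_succ_succ' n k)
  push_cast at h3
  nlinarith [h2, h3]

lemma pmean_insert {ι : Type*} [DecidableEq ι] (x : ι → ℝ) {s : Finset ι} {a : ι}
    (ha : a ∉ s) {k : ℕ} (hk : k + 1 ≤ s.card) :
    pmean x (insert a s) (k+1)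
      = (((s.card:ℝ) - k)/((s.card:ℝ)+1)) * pmean x s (k+1)
        + (((k:ℝ)+1)/((s.card:ℝ)+1)) * x a * pmean x s k := by
  set n := s.card with hn
  have hC1 : (0:ℝ) < ((n+1).choose (k+1) : ℝ) := by
    exact_mod_cast Nat.choose_pos (by omega)
  have hC2 : (0:ℝ) < (n.choose (k+1) : ℝ) := by exact_mod_cast Nat.choose_pos hk
  have hC3 : (0:ℝ) < (n.choose k : ℝ) := by exact_mod_cast Nat.choose_pos (by omega)
  have hN : (0:ℝ) < (n:ℝ)+1 := by positivity
  rw [pmean, pmean, pmean, esum_insert x ha, card_insert_of_notMem ha]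
  have hcast : (((n+1):ℕ):ℝ) = (n:ℝ)+1 := by push_cast; ring
  rw [show ((n+1 : ℕ).choose (k+1) : ℝ) = (((n:ℕ)+1).choose (k+1) : ℝ) from rfl]
  have h1 := choose_id1 n k
  have h2 := choose_id2 n k
  rw [← hn]
  field_simp
  linear_combination (-(esum x s (k+1) * (n.choose k))) * h1 +
    (-(x a * esum x s k * (n.choose (k+1)))) * h2

lemma pmean_zero {ι : Type*} (x : ι → ℝ) (s : Finset ι) : pmean x s 0 = 1 := by
  simp [pmean, esum_zero]

lemma pmean_pos {ι : Type*} {x : ι → ℝ} {s : Finset ι} (hx : ∀ i ∈ s, 0 < x i) {j : ℕ}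
    (hj : j ≤ s.card) : 0 < pmean x s j :=
  div_pos (esum_pos hx hj) (by exact_mod_cast Nat.choose_pos hj)

lemma pmean_nonneg {ι : Type*} {x : ι → ℝ} {s : Finset ι} (hx : ∀ i ∈ s, 0 < x i) (j : ℕ) :
    0 ≤ pmean x s j :=
  div_nonneg (esum_nonneg (fun i hi => (hx i hi).le) j) (by positivity)

lemma newton {ι : Type*} [DecidableEq ι] (x : ι → ℝ) :
    ∀ (s : Finset ι), (∀ i ∈ s, 0 < x i) → ∀ j : ℕ, j + 2 ≤ s.card →
      pmean x s j * pmean x s (j+2) ≤ pmean x s (j+1)^2 := by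
  intro s
  induction s using Finset.induction_on with
  | empty => intro _ j hj; simp at hj
  | insert a s ha IH =>
    intro hpos j hj
    have hx : ∀ i ∈ s, 0 < x i := fun i hi => hpos i (mem_insert_of_mem hi)
    have ht : 0 < x a := hpos a (mem_insert_self a s)
    obtain ⟨n, hsn⟩ : ∃ n, s.card = n := ⟨_, rfl⟩
    have hcard : (insert a s).card = n + 1 := by rw [card_insert_of_notMem ha, hsn]
    rw [hcard] at hj
    rw [hsn] at IH
    have hNpos : (0:ℝ) < (n:ℝ) + 1 := by positivity
    have hNne : ((n:ℝ) + 1) ≠ 0 := ne_of_gt hNpos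
    have hj1n : j + 1 ≤ n := by omega
    have hb : 0 < pmean x s j := pmean_pos hx (by omega)
    have hc : 0 < pmean x s (j+1) := pmean_pos hx (hsn ▸ hj1n)
    have hd : 0 ≤ pmean x s (j+2) := pmean_nonneg hx _
    have haa : 0 ≤ (if j = 0 then 0 else pmean x s (j-1)) := by
      split
      · exact le_rfl
      · exact pmean_nonneg hx _
    have hhpos : 0 < 1/((n:ℝ)+1) := by positivity
    have hu1 : 1/((n:ℝ)+1) ≤ ((j:ℝ)+1)/((n:ℝ)+1) := by
      have : (0:ℝ) ≤ (j:ℝ) := Nat.cast_nonneg j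
      gcongr
      linarith
    have hu2 : ((j:ℝ)+1)/((n:ℝ)+1) ≤ 1 - 1/((n:ℝ)+1) := by
      rw [div_le_iff₀ hNpos]
      have : (j:ℝ) + 2 ≤ (n:ℝ) + 1 := by exact_mod_cast hj
      field_simp
      nlinarith
    have F1 : pmean x (insert a s) (j+1)
        = (1-((j:ℝ)+1)/((n:ℝ)+1)) * pmean x s (j+1)
          + (((j:ℝ)+1)/((n:ℝ)+1)) * x a * pmean x s j := by
      rw [pmean_insert x ha (hsn ▸ hj1n), hsn]
      have e : ((n:ℝ) - j)/((n:ℝ)+1) = 1 - ((j:ℝ)+1)/((n:ℝ)+1) := by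
        field_simp
        ring
      rw [e]
    have F2 : pmean x (insert a s) j
        = (1-((j:ℝ)+1)/((n:ℝ)+1)+1/((n:ℝ)+1)) * pmean x s j
          + (((j:ℝ)+1)/((n:ℝ)+1)-1/((n:ℝ)+1)) * x a
            * (if j = 0 then 0 else pmean x s (j-1)) := by
      rcases Nat.eq_zero_or_pos j with hj0 | hj0
      · subst hj0
        rw [pmean_zero, pmean_zero, if_pos rfl]
        push_cast
        field_simp
        ring
      · obtain ⟨k, rfl⟩ : ∃ k, j = k + 1 := ⟨j - 1, by omega⟩
        rw [pmean_insert x ha (by omega : k + 1 ≤ s.card), hsn, if_neg (by omega)]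
        simp only [Nat.add_sub_cancel]
        push_cast
        have e1 : ((n:ℝ) - k)/((n:ℝ)+1) = 1 - ((k:ℝ)+1+1)/((n:ℝ)+1) + 1/((n:ℝ)+1) := by
          field_simp; ring
        have e2 : ((k:ℝ)+1)/((n:ℝ)+1) = ((k:ℝ)+1+1)/((n:ℝ)+1) - 1/((n:ℝ)+1) := by
          field_simp
          ring
        rw [e1, e2]
    have F3 : pmean x (insert a s) (j+2)
        = (1-((j:ℝ)+1)/((n:ℝ)+1)-1/((n:ℝ)+1)) * pmean x s (j+2)
          + (((j:ℝ)+1)/((n:ℝ)+1)+1/((n:ℝ)+1)) * x a * pmean x s (j+1) := by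
      rcases Nat.lt_or_ge (j+2) (n+1) with h2 | h2
      · rw [show j+2 = (j+1)+1 from rfl,
          pmean_insert x ha (by omega : j+1+1 ≤ s.card), hsn]
        push_cast
        have e1 : ((n:ℝ) - ((j:ℝ)+1))/((n:ℝ)+1)
            = 1 - ((j:ℝ)+1)/((n:ℝ)+1) - 1/((n:ℝ)+1) := by field_simp; ring
        have e2 : ((j:ℝ)+1+1)/((n:ℝ)+1) = ((j:ℝ)+1)/((n:ℝ)+1) + 1/((n:ℝ)+1) := by
          field_simp
        rw [e1, e2]
      · have hj2 : j + 2 = n + 1 := by omega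
        have hjr : (j:ℝ) + 2 = (n:ℝ) + 1 := by exact_mod_cast hj2
        have e0 : 1 - ((j:ℝ)+1)/((n:ℝ)+1) - 1/((n:ℝ)+1) = 0 := by
          field_simp
          linarith
        have e1 : ((j:ℝ)+1)/((n:ℝ)+1) + 1/((n:ℝ)+1) = 1 := by
          rw [← add_div]
          rw [show (j:ℝ)+1+1 = (n:ℝ)+1 by linarith, div_self hNne]
        have e2 : pmean x (insert a s) (j+2) = x a * pmean x s (j+1) := by
          rw [show j + 2 = (j+1)+1 from rfl, pmean, hcard, esum_insert x ha,
            esum_of_card_lt x (show s.card < j+1+1 by omega)]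
          rw [pmean, hsn]
          have hjn' : j + 1 = n := by omega
          rw [hjn', Nat.choose_self]
          norm_num
        rw [e2, e0, e1]
        ring
    have h1 : (if j = 0 then 0 else pmean x s (j-1)) * pmean x s (j+1)
        ≤ pmean x s j ^ 2 := by
      rcases Nat.eq_zero_or_pos j with hj0 | hj0
      · rw [if_pos hj0]; nlinarith [sq_nonneg (pmean x s j)]
      · obtain ⟨k, rfl⟩ : ∃ k, j = k + 1 := ⟨j - 1, by omega⟩
        rw [if_neg (by omega)]
        simpa using IH hx k (by omega)
    have h2 : pmean x s j * pmean x s (j+2) ≤ pmean x s (j+1) ^ 2 := by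
      rcases Nat.lt_or_ge (j+2) (n+1) with h2 | h2
      · exact IH hx j (by omega)
      · have h0 : esum x s (j+2) = 0 := esum_of_card_lt x (by omega)
        have hd0 : pmean x s (j+2) = 0 := by rw [pmean, h0, zero_div]
        rw [hd0]; nlinarith [sq_nonneg (pmean x s (j+1))]
    calc pmean x (insert a s) j * pmean x (insert a s) (j+2)
        ≤ ((1-((j:ℝ)+1)/((n:ℝ)+1)) * pmean x s (j+1)
            + (((j:ℝ)+1)/((n:ℝ)+1)) * x a * pmean x s j)^2 := by
          rw [F2, F3]
          exact key _ _ _ _ _ _ _ haa hb hc hd ht hhpos hu1 hu2 h1 h2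
      _ = pmean x (insert a s) (j+1)^2 := by rw [F1]


/-- Let `ℓ ≥ 1` and let `p j = e_j(x_1, …, x_ℓ)/C(ℓ,j)` be the
normalized elementary symmetric means of positive reals `x_1, …, x_ℓ`.  If
`α_1, …, α_ℓ` and `β_1, …, β_ℓ` are positive reals with `Σ_j j·α_j = Σ_j j·β_j`
and `Σ_{i=j}^{ℓ} (i-j+1)·α_i ≥ Σ_{i=j}^{ℓ} (i-j+1)·β_i` for all `2 ≤ j ≤ ℓ`,
then `Π_{j=1}^{ℓ} p_j^{α_j} ≤ Π_{j=1}^{ℓ} p_j^{β_j}`. -/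
theorem statement17 (ℓ : ℕ) (hℓ : 1 ≤ ℓ) (x : Fin ℓ → ℝ) (hx : ∀ i, 0 < x i)
    (p : ℕ → ℝ)
    (hp : ∀ j, p j =
      (∑ t ∈ (Finset.univ : Finset (Fin ℓ)).powersetCard j, ∏ i ∈ t, x i) /
        (Nat.choose ℓ j : ℝ))
    (α β : ℕ → ℝ)
    (hα : ∀ j ∈ Finset.Icc 1 ℓ, 0 < α j) (hβ : ∀ j ∈ Finset.Icc 1 ℓ, 0 < β j)
    (hsum : ∑ j ∈ Finset.Icc 1 ℓ, (j : ℝ) * α j = ∑ j ∈ Finset.Icc 1 ℓ, (j : ℝ) * β j)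
    (hmaj : ∀ j, 2 ≤ j → j ≤ ℓ →
      ∑ i ∈ Finset.Icc j ℓ, ((i : ℝ) - (j : ℝ) + 1) * α i ≥
        ∑ i ∈ Finset.Icc j ℓ, ((i : ℝ) - (j : ℝ) + 1) * β i) :
    ∏ j ∈ Finset.Icc 1 ℓ, p j ^ α j ≤ ∏ j ∈ Finset.Icc 1 ℓ, p j ^ β j := by
  have hcard : (Finset.univ : Finset (Fin ℓ)).card = ℓ := by simp
  have hp' : ∀ j, p j = pmean x Finset.univ j := by
    intro j; rw [hp j, pmean, esum, hcard]
  have hppos : ∀ j, j ≤ ℓ → 0 < p j := by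
    intro j hj
    rw [hp' j]
    exact pmean_pos (fun i _ => hx i) (by rw [hcard]; exact hj)
  -- q = log p
  set q : ℕ → ℝ := fun j => Real.log (p j) with hqdef
  have hq0 : q 0 = 0 := by
    have : p 0 = 1 := by rw [hp' 0, pmean_zero]
    simp [hqdef, this]
  -- Newton / log-concavity
  have hE : ∀ k, 2 ≤ k → k ≤ ℓ → q k - 2*q (k-1) + q (k-2) ≤ 0 := by
    intro k hk2 hkl
    obtain ⟨m, rfl⟩ : ∃ m, k = m + 2 := ⟨k - 2, by omega⟩
    have hnewt : p m * p (m+2) ≤ p (m+1)^2 := by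
      rw [hp' m, hp' (m+2), hp' (m+1)]
      exact newton x Finset.univ (fun i _ => hx i) m (by rw [hcard]; omega)
    have h0 : 0 < p m := hppos m (by omega)
    have h2 : 0 < p (m+2) := hppos (m+2) (by omega)
    have h1 : 0 < p (m+1) := hppos (m+1) (by omega)
    have hlog := Real.log_le_log (by positivity) hnewt
    rw [Real.log_mul (ne_of_gt h0) (ne_of_gt h2), Real.log_pow] at hlog
    have e1 : m + 2 - 1 = m + 1 := by omega
    have e2 : m + 2 - 2 = m := by omega
    rw [e1, e2]
    simp only [hqdef]
    push_cast at hlog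
    linarith
  -- first differences
  have hD : ∀ j, 1 ≤ j → j ≤ ℓ →
      q j - q (j-1) = q 1 + ∑ k ∈ Icc 2 j, (q k - 2*q (k-1) + q (k-2)) := by
    intro j hj1
    induction j, hj1 using Nat.le_induction with
    | base =>
      intro _
      rw [show Icc 2 1 = (∅ : Finset ℕ) from rfl]
      simp [hq0]
    | succ m hm ih =>
      intro hml
      have ihm := ih (by omega)
      rw [Finset.sum_Icc_succ_top (by omega : 2 ≤ m+1)]
      have e1 : m + 1 - 1 = m := by omega
      have e2 : m + 1 - 2 = m - 1 := by omega
      rw [e1, e2]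
      linarith
  -- discrete Taylor expansion
  have hQ : ∀ j, j ≤ ℓ →
      q j = (j:ℝ) * q 1
        + ∑ k ∈ Icc 2 j, ((j:ℝ)-(k:ℝ)+1)*(q k - 2*q (k-1) + q (k-2)) := by
    intro j
    induction j with
    | zero => intro _; simp [hq0]
    | succ m ih =>
      intro hml
      have ihm := ih (by omega)
      have hDm := hD (m+1) (by omega) hml
      have e1 : m + 1 - 1 = m := by omega
      rw [e1] at hDm
      rcases Nat.eq_zero_or_pos m with rfl | hm
      · rw [show Icc 2 1 = (∅ : Finset ℕ) from rfl, show Icc 2 0 = (∅ : Finset ℕ) from rfl] at *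
        simp only [Finset.sum_empty] at hDm ihm ⊢
        push_cast
        linarith
      · rw [Finset.sum_Icc_succ_top (by omega : 2 ≤ m+1)] at hDm ⊢
        have h1 : ∑ k ∈ Icc 2 m, (((m:ℕ):ℝ)+1-(k:ℝ)+1)*(q k - 2*q (k-1) + q (k-2))
            = ∑ k ∈ Icc 2 m, (((m:ℝ)-(k:ℝ)+1)*(q k - 2*q (k-1) + q (k-2))
                + (q k - 2*q (k-1) + q (k-2))) :=
          Finset.sum_congr rfl (by intro k _; ring)
        rw [Finset.sum_add_distrib] at h1
        have e2 : m + 1 - 2 = m - 1 := by omega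
        rw [e1, e2] at hDm ⊢
        push_cast
        push_cast at h1
        rw [h1]
        push_cast at ihm
        linarith
  -- main summation identity
  have hswap : ∑ j ∈ Icc 1 ℓ, (α j - β j) * q j
      = q 1 * (∑ j ∈ Icc 1 ℓ, (j:ℝ) * (α j - β j))
        + ∑ k ∈ Icc 2 ℓ, (q k - 2*q (k-1) + q (k-2))
            * (∑ i ∈ Icc k ℓ, ((i:ℝ)-(k:ℝ)+1)*(α i - β i)) := by
    have step1 : ∑ j ∈ Icc 1 ℓ, (α j - β j) * q j
        = ∑ j ∈ Icc 1 ℓ, ((α j - β j) * ((j:ℝ) * q 1)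
            + ∑ k ∈ Icc 2 j, (α j - β j) * (((j:ℝ)-(k:ℝ)+1)*(q k - 2*q (k-1) + q (k-2)))) := by
      refine Finset.sum_congr rfl fun j hj => ?_
      rw [hQ j (Finset.mem_Icc.1 hj).2, mul_add, Finset.mul_sum]
    rw [step1, Finset.sum_add_distrib]
    congr 1
    · rw [Finset.mul_sum]
      exact Finset.sum_congr rfl fun j _ => by ring
    · have swap : ∑ j ∈ Icc 1 ℓ, ∑ k ∈ Icc 2 j,
          (α j - β j) * (((j:ℝ)-(k:ℝ)+1)*(q k - 2*q (k-1) + q (k-2)))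
          = ∑ k ∈ Icc 2 ℓ, ∑ j ∈ Icc k ℓ,
          (α j - β j) * (((j:ℝ)-(k:ℝ)+1)*(q k - 2*q (k-1) + q (k-2))) := by
        rw [Finset.sum_sigma', Finset.sum_sigma']
        apply Finset.sum_nbij' (fun pr => ⟨pr.2, pr.1⟩) (fun pr => ⟨pr.2, pr.1⟩) <;>
          simp (config := {contextual := true}) [Finset.mem_sigma, Finset.mem_Icc] <;> omega
      rw [swap]
      refine Finset.sum_congr rfl fun k _ => ?_
      rw [Finset.mul_sum]
      exact Finset.sum_congr rfl fun j _ => by ring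
  -- the coefficient sums
  have hzero : ∑ j ∈ Icc 1 ℓ, (j:ℝ) * (α j - β j) = 0 := by
    have : ∑ j ∈ Icc 1 ℓ, (j:ℝ) * (α j - β j)
        = (∑ j ∈ Icc 1 ℓ, (j:ℝ) * α j) - ∑ j ∈ Icc 1 ℓ, (j:ℝ) * β j := by
      rw [← Finset.sum_sub_distrib]
      exact Finset.sum_congr rfl fun j _ => by ring
    rw [this, hsum, sub_self]
  have hterm : ∀ k ∈ Icc 2 ℓ, (q k - 2*q (k-1) + q (k-2))
      * (∑ i ∈ Icc k ℓ, ((i:ℝ)-(k:ℝ)+1)*(α i - β i)) ≤ 0 := by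
    intro k hk
    obtain ⟨hk2, hkl⟩ := Finset.mem_Icc.1 hk
    have hT : 0 ≤ ∑ i ∈ Icc k ℓ, ((i:ℝ)-(k:ℝ)+1)*(α i - β i) := by
      have : ∑ i ∈ Icc k ℓ, ((i:ℝ)-(k:ℝ)+1)*(α i - β i)
          = (∑ i ∈ Icc k ℓ, ((i:ℝ)-(k:ℝ)+1) * α i)
            - ∑ i ∈ Icc k ℓ, ((i:ℝ)-(k:ℝ)+1) * β i := by
        rw [← Finset.sum_sub_distrib]
        exact Finset.sum_congr rfl fun i _ => by ring
      rw [this, sub_nonneg]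
      exact hmaj k hk2 hkl
    exact mul_nonpos_of_nonpos_of_nonneg (hE k hk2 hkl) hT
  have hmain : ∑ j ∈ Icc 1 ℓ, (α j - β j) * q j ≤ 0 := by
    rw [hswap, hzero, mul_zero, zero_add]
    exact Finset.sum_nonpos hterm
  -- conclude
  have hsum_le : ∑ j ∈ Icc 1 ℓ, α j * q j ≤ ∑ j ∈ Icc 1 ℓ, β j * q j := by
    have : ∑ j ∈ Icc 1 ℓ, (α j - β j) * q j
        = (∑ j ∈ Icc 1 ℓ, α j * q j) - ∑ j ∈ Icc 1 ℓ, β j * q j := by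
      rw [← Finset.sum_sub_distrib]
      exact Finset.sum_congr rfl fun j _ => by ring
    linarith [this ▸ hmain]
  have hprod : ∀ f : ℕ → ℝ,
      ∏ j ∈ Icc 1 ℓ, p j ^ f j = Real.exp (∑ j ∈ Icc 1 ℓ, f j * q j) := by
    intro f
    rw [Real.exp_sum]
    refine Finset.prod_congr rfl fun j hj => ?_
    rw [Real.rpow_def_of_pos (hppos j (Finset.mem_Icc.1 hj).2), mul_comm]
  rw [hprod α, hprod β]
  exact Real.exp_le_exp.2 hsum_le
end
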